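/- Let n be a natural number and let f : ℝⁿ → ℝⁿ be a C¹ diffeomorphism (f is bijective, and both f and its inverse are continuously differentiable). Let φ : ℝⁿ → [0,∞] be a Borel measurable function and let μ be the measure with density φ with respect to Lebesgue measure (μ = volume.withDensity φ). If μ is invariant under f (the pushforward of μ by f equals μ), then for Lebesgue-almost every x ∈ ℝⁿ one has φ(f(x)) · |det Df(x)| = φ(x), where Df(x) denotes the (Fréchet) derivative of f at x. -/

import Mathlib

open MeasureTheory
open scoped ENNReal

/-- The almost-everywhere cocycle equation `φ(f x) · |det Df(x)| = φ(x)` satisfied by the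
density `φ` of an absolutely continuous invariant measure of a `C¹` diffeomorphism of `ℝⁿ`. -/
theorem acip_density_cocycle (n : ℕ)
    (f : EuclideanSpace ℝ (Fin n) → EuclideanSpace ℝ (Fin n))
    (hbij : Function.Bijective f)
    (hf : ContDiff ℝ 1 f)
    (hfinv : ContDiff ℝ 1 (Function.invFun f))
    (φ : EuclideanSpace ℝ (Fin n) → ℝ≥0∞)
    (hφ : Measurable φ)
    (hinv : Measure.map f (volume.withDensity φ) = volume.withDensity φ) :
    ∀ᵐ x ∂(volume : Measure (EuclideanSpace ℝ (Fin n))),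
      φ (f x) * ENNReal.ofReal |(fderiv ℝ f x).det| = φ x := by
  let E := EuclideanSpace ℝ (Fin n)
  have hfc : Continuous f := hf.continuous
  have hfm : Measurable f := hfc.measurable
  -- f is a homeomorphism
  have heq : Function.LeftInverse (Function.invFun f) f := Function.leftInverse_invFun hbij.1
  have heq' : Function.RightInverse (Function.invFun f) f :=
    Function.rightInverse_invFun hbij.2
  let h : Homeomorph E E :=
    { toFun := f, invFun := Function.invFun f, left_inv := heq, right_inv := heq',
      continuous_toFun := hfc, continuous_invFun := hfinv.continuous }
  have hemb : MeasurableEmbedding f := h.measurableEmbedding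
  have hdiff : ∀ x : E, HasFDerivAt f (fderiv ℝ f x) x :=
    fun x => (hf.differentiable one_ne_zero x).hasFDerivAt
  have hmeas : Measurable fun x => φ (f x) * ENNReal.ofReal |(fderiv ℝ f x).det| := by
    have : Measurable fun x => fderiv ℝ f x :=
      (hf.continuous_fderiv one_ne_zero).measurable
    exact (hφ.comp hfm).mul
      ((ENNReal.measurable_ofReal.comp ((continuous_abs.measurable).comp
        (ContinuousLinearMap.continuous_det.measurable.comp this))))
  have key : (volume : Measure E).withDensity
      (fun x => φ (f x) * ENNReal.ofReal |(fderiv ℝ f x).det|) =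
      (volume : Measure E).withDensity φ := by
    ext s hs
    rw [withDensity_apply _ hs, withDensity_apply _ hs]
    have himg : MeasurableSet (f '' s) := hemb.measurableSet_image.2 hs
    have cov := lintegral_image_eq_lintegral_abs_det_fderiv_mul (volume : Measure E) hs
      (fun x _ => (hdiff x).hasFDerivWithinAt) (hbij.1.injOn) φ
    have hpre : f ⁻¹' (f '' s) = s := Set.preimage_image_eq s hbij.1
    have hμ : ∫⁻ x in f '' s, φ x = ∫⁻ x in s, φ x := by
      have := congrArg (fun μ => μ (f '' s)) hinv
      simp only [Measure.map_apply hfm himg, hpre] at this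
      rw [withDensity_apply _ himg, withDensity_apply _ hs] at this
      exact this.symm
    rw [← hμ, cov]
    exact lintegral_congr fun x => mul_comm _ _
  exact (withDensity_eq_iff_of_sigmaFinite hmeas.aemeasurable hφ.aemeasurable).1 key
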